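/- Let $\gamma_1,\gamma_2,\rho,\alpha,\beta,\lambda \geq 0$ with $\beta - \alpha > 0$, $\gamma_2\rho - \gamma_1\alpha > 0$, and suppose $\gamma_1\alpha - \gamma_2\rho + \gamma_2(\beta-\alpha) \neq 0$ and $\alpha \neq 0$. Then the discriminant of the quadratic function $f(\Lambda) = -\frac{\alpha^2(\gamma_1\alpha - \gamma_2\rho + \gamma_2(\beta-\alpha))^2}{2\gamma_2^2(\gamma_2\rho - \gamma_1\alpha)}\Lambda^2 + \left(2(\beta-\alpha) + \frac{\gamma_1\alpha}{\gamma_2} + \frac{\gamma_1\alpha(\beta-\alpha)}{\gamma_2\rho - \gamma_1\alpha}\right)\Lambda - \frac{\gamma_1^2}{2(\gamma_2\rho - \gamma_1\alpha)}$ is strictly positive; consequently there exists $\Lambda > 0$ with $f(\Lambda) > 0$. -/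

import Mathlib

/-- positivity of the discriminant of the quadratic `f` in the
risk-neutral case, and existence of `Λ > 0` with `f Λ > 0`. -/
theorem stmt0 (γ₁ γ₂ ρ α β lam : ℝ)
    (hγ₁ : 0 ≤ γ₁) (hγ₂ : 0 ≤ γ₂) (hρ : 0 ≤ ρ) (hα : 0 ≤ α) (hβ : 0 ≤ β) (hlam : 0 ≤ lam)
    (hβα : 0 < β - α) (hden : 0 < γ₂ * ρ - γ₁ * α)
    (hne : γ₁ * α - γ₂ * ρ + γ₂ * (β - α) ≠ 0) (hαne : α ≠ 0) :
    (let a : ℝ := -(α ^ 2 * (γ₁ * α - γ₂ * ρ + γ₂ * (β - α)) ^ 2) /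
        (2 * γ₂ ^ 2 * (γ₂ * ρ - γ₁ * α));
     let b : ℝ := 2 * (β - α) + γ₁ * α / γ₂ + γ₁ * α * (β - α) / (γ₂ * ρ - γ₁ * α);
     let c : ℝ := -(γ₁ ^ 2) / (2 * (γ₂ * ρ - γ₁ * α));
     0 < b ^ 2 - 4 * a * c ∧ ∃ Λ : ℝ, 0 < Λ ∧ 0 < a * Λ ^ 2 + b * Λ + c) := by
  intro a b c
  have hγ₂pos : 0 < γ₂ := by nlinarith
  have hγ₂ne : γ₂ ≠ 0 := hγ₂pos.ne'
  have hDne : γ₂ * ρ - γ₁ * α ≠ 0 := hden.ne'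
  set q : ℝ := γ₁ * α * (γ₁ * α - γ₂ * ρ + γ₂ * (β - α)) / (γ₂ * (γ₂ * ρ - γ₁ * α)) with hqdef
  have hq : 4 * a * c = q ^ 2 := by
    simp only [a, c, hqdef]
    field_simp
    ring
  have hb1 : b - q = 2 * (β - α) + 2 * (γ₁ * α) / γ₂ := by
    simp only [b, hqdef]
    have hD' : γ₂ * ρ - α * γ₁ ≠ 0 := by rwa [mul_comm α]
    field_simp
    ring
  have hb2 : b + q = 2 * (β - α) + 2 * (γ₁ * α) * (β - α) / (γ₂ * ρ - γ₁ * α) := by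
    simp only [b, hqdef]
    have hD' : γ₂ * ρ - α * γ₁ ≠ 0 := by rwa [mul_comm α]
    field_simp
    ring
  have h1 : 0 < b - q := by
    rw [hb1]
    have : 0 ≤ 2 * (γ₁ * α) / γ₂ := by positivity
    linarith
  have h2 : 0 < b + q := by
    rw [hb2]
    have : 0 ≤ 2 * (γ₁ * α) * (β - α) / (γ₂ * ρ - γ₁ * α) := by positivity
    linarith
  have hdisc : 0 < b ^ 2 - 4 * a * c := by
    rw [hq]
    nlinarith [mul_pos h1 h2]
  have hbpos : 0 < b := by linarith
  have hK2 : 0 < α ^ 2 * (γ₁ * α - γ₂ * ρ + γ₂ * (β - α)) ^ 2 := by positivity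
  have hapos : a < 0 := by
    simp only [a]
    apply div_neg_of_neg_of_pos
    · linarith
    · positivity
  have hane : a ≠ 0 := hapos.ne
  refine ⟨hdisc, -b / (2 * a), ?_, ?_⟩
  · apply div_pos_of_neg_of_neg
    · linarith
    · linarith
  · have : a * (-b / (2 * a)) ^ 2 + b * (-b / (2 * a)) + c =
        (4 * a * c - b ^ 2) / (4 * a) := by
      field_simp
      ring
    rw [this]
    apply div_pos_of_neg_of_neg
    · linarith
    · linarith
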